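/- For every F ⊆ {0,1}⁴ such that no word in F begins with 11, there is an NFA with at most 6 states whose accepted words of length 4 are exactly F; hence 6-state NFAs shatter a set of 12 binary words of length 4. -/
import Mathlib

def mkNFA (F : Set (List Bool)) : NFA Bool (Fin 6) where
  start := {0}
  accept := {0}
  step q c := {s |
    (q = 0 ∧ s = (if c then 2 else 1)) ∨
    (q = 1 ∧ s = (if c then 4 else 3)) ∨
    (q = 2 ∧ c = false ∧ s = 5) ∨
    (q = 3 ∧ ((s = 4 ∧ [false,false,c,false] ∈ F) ∨ (s = 5 ∧ [false,false,c,true] ∈ F))) ∨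
    (q = 4 ∧ ((s = 4 ∧ [false,true,c,false] ∈ F) ∨ (s = 5 ∧ [false,true,c,true] ∈ F) ∨ (s = 0 ∧ c = false))) ∨
    (q = 5 ∧ ((s = 4 ∧ [true,false,c,false] ∈ F) ∨ (s = 5 ∧ [true,false,c,true] ∈ F) ∨ (s = 0 ∧ c = true)))}

set_option maxHeartbeats 2000000

/-- If no word of F ⊆ {0,1}⁴ begins with 11, then F is the set of length-4 words of
some NFA with 6 states. -/
theorem six_states_avoiding_prefix (F : Set (List Bool))
    (hF : ∀ x ∈ F, x.length = 4 ∧ x.take 2 ≠ [true, true]) :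
    ∃ M : NFA Bool (Fin 6), ∀ x : List Bool, x.length = 4 → (x ∈ M.accepts ↔ x ∈ F) := by
  refine ⟨mkNFA F, ?_⟩
  intro x hx
  rcases x with _|⟨a,_|⟨b,_|⟨c,_|⟨d,_|t⟩⟩⟩⟩ <;> simp_all
  have h11 : ∀ c d : Bool, [true, true, c, d] ∉ F := by
    intro c d h
    exact (hF _ h).2 rfl
  have key : ∀ w : List Bool, (w ∈ (mkNFA F).accepts ↔
      ∃ q ∈ (mkNFA F).evalFrom {0} w, q = 0) := by
    intro w
    rw [NFA.mem_accepts]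
    constructor
    · rintro ⟨S, hS, hS'⟩
      exact ⟨S, hS', by simpa [mkNFA] using hS⟩
    · rintro ⟨q, hq, rfl⟩
      exact ⟨0, by simp [mkNFA], hq⟩
  rw [key]
  show (∃ q ∈ (mkNFA F).stepSet ((mkNFA F).stepSet ((mkNFA F).stepSet
      ((mkNFA F).stepSet {0} a) b) c) d, q = 0) ↔ _
  cases a <;> cases b <;> cases c <;> cases d <;>
    simp only [NFA.mem_stepSet, mkNFA, Set.mem_singleton_iff, Set.mem_setOf_eq,
      if_true, if_false, Bool.false_eq_true, Bool.true_eq_false, and_true, and_false,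
      false_and, true_and, false_or, or_false, exists_eq_left, Fin.reduceEq] <;>
    aesop
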